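/- Local recovery of the power-law kernel as the order tends to one: let l > 0, x ∈ ℝ, and let ψ : ℝ → ℝ be continuous on [x−l, x]. Then lim_{α → 1⁻} (1/Γ(1−α)) ∫_{x−l}^{x} (x−s)^{−α} ψ(s) ds = ψ(x). -/

import Mathlib

open MeasureTheory intervalIntegral Filter Topology

lemma aux_Gamma_id {α : ℝ} (hα : α < 1) :
    Real.Gamma (2 - α) = (1 - α) * Real.Gamma (1 - α) := by
  have h : (1 : ℝ) - α ≠ 0 := by linarith
  have := Real.Gamma_add_one h
  rw [show (1 : ℝ) - α + 1 = 2 - α by ring] at this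
  exact this

lemma aux_cont_Gamma : ContinuousAt Real.Gamma 1 := by
  refine (Real.differentiableAt_Gamma fun m => ?_).continuousAt
  intro h
  have h0 : (0:ℝ) ≤ (m:ℝ) := Nat.cast_nonneg m
  have h1 : (0:ℝ) < 1 := one_pos
  rw [h] at h1; linarith

lemma aux_tendsto_two_sub : Tendsto (fun α : ℝ => Real.Gamma (2 - α)) (𝓝[<] 1) (𝓝 1) := by
  have h1 : Tendsto (fun α : ℝ => 2 - α) (𝓝[<] (1:ℝ)) (𝓝 1) := by
    have : Tendsto (fun α : ℝ => 2 - α) (𝓝 (1:ℝ)) (𝓝 (2 - 1)) :=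
      (continuous_const.sub continuous_id).tendsto 1
    have h2 := this.mono_left (nhdsWithin_le_nhds (s := Set.Iio (1:ℝ)))
    norm_num at h2; exact h2
  have := (aux_cont_Gamma.tendsto).comp h1
  simpa [Real.Gamma_one, Function.comp_def] using this

/-- `1/Γ(1-α) → 0` as `α → 1⁻`. -/
lemma aux_inv_Gamma_tendsto : Tendsto (fun α : ℝ => 1 / Real.Gamma (1 - α)) (𝓝[<] 1) (𝓝 0) := by
  have h2 : Tendsto (fun α : ℝ => (1 - α) / Real.Gamma (2 - α)) (𝓝[<] 1) (𝓝 0) := by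
    have hnum : Tendsto (fun α : ℝ => 1 - α) (𝓝[<] (1:ℝ)) (𝓝 0) := by
      have : Tendsto (fun α : ℝ => 1 - α) (𝓝 (1:ℝ)) (𝓝 (1 - 1)) :=
        (continuous_const.sub continuous_id).tendsto 1
      simpa using this.mono_left nhdsWithin_le_nhds
    simpa [Pi.div_def] using hnum.div aux_tendsto_two_sub one_ne_zero
  refine h2.congr' ?_
  filter_upwards [self_mem_nhdsWithin] with α (hα : α < 1)
  have hpos : 0 < Real.Gamma (1 - α) := Real.Gamma_pos_of_pos (by linarith)
  have h1α : (0:ℝ) < 1 - α := by linarith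
  rw [aux_Gamma_id hα]
  field_simp

/-- local recovery of the power-law (Riemann–Liouville) kernel as the
order tends to one: for `ψ` continuous on `[x−l, x]`,
`(1/Γ(1−α)) ∫_{x−l}^{x} (x−s)^{−α} ψ(s) ds → ψ(x)` as `α → 1⁻`. -/
theorem stmt_14 (l x : ℝ) (hl : 0 < l) (ψ : ℝ → ℝ)
    (hψ : ContinuousOn ψ (Set.Icc (x - l) x)) :
    Tendsto
      (fun α : ℝ => (1 / Real.Gamma (1 - α)) * ∫ s in (x - l)..x, (x - s) ^ (-α) * ψ s)
      (𝓝[<] 1) (𝓝 (ψ x)) := by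
  set S : Set ℝ := Set.Icc (x - l) x with hS
  have hxl : x - l ≤ x := by linarith
  have hxS : x ∈ S := by simp [hS, hxl]
  set φ : ℝ → ℝ → ℝ := fun α s => (1 / Real.Gamma (1 - α)) * (x - s) ^ (-α) with hφ
  have hmeasS : MeasurableSet S := measurableSet_Icc
  -- eventually α ∈ (0,1)
  have hev : ∀ᶠ α : ℝ in 𝓝[<] 1, 0 < α ∧ α < 1 := by
    filter_upwards [Ioo_mem_nhdsLT_of_mem (by norm_num : (1:ℝ) ∈ Set.Ioc 0 1)] with α hα
    exact ⟨hα.1, hα.2⟩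
  -- integral of φ over S
  have hint : ∀ α : ℝ, 0 < α → α < 1 →
      ∫ s in S, φ α s = l ^ (1 - α) / Real.Gamma (2 - α) := by
    intro α hα0 hα1
    have h1 : ∫ s in S, (x - s) ^ (-α) = l ^ (1 - α) / (1 - α) := by
      rw [hS, MeasureTheory.integral_Icc_eq_integral_Ioc, ← intervalIntegral.integral_of_le hxl]
      have := intervalIntegral.integral_comp_sub_left (fun s : ℝ => s ^ (-α)) x
        (a := x - l) (b := x)
      rw [show x - x = 0 by ring, show x - (x - l) = l by ring] at this
      rw [this, integral_rpow (Or.inl (by linarith))]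
      rw [Real.zero_rpow (by linarith), show -α + 1 = 1 - α by ring]
      simp
    calc ∫ s in S, φ α s = (1 / Real.Gamma (1 - α)) * ∫ s in S, (x - s) ^ (-α) := by
          simp only [hφ]; rw [MeasureTheory.integral_const_mul]
      _ = l ^ (1 - α) / Real.Gamma (2 - α) := by
          rw [h1, aux_Gamma_id hα1]
          have hpos : 0 < Real.Gamma (1 - α) := Real.Gamma_pos_of_pos (by linarith)
          field_simp
  -- hypothesis: integral tends to 1
  have hiφ : Tendsto (fun α : ℝ => ∫ s in S, φ α s) (𝓝[<] 1) (𝓝 1) := by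
    have h2 : Tendsto (fun α : ℝ => l ^ (1 - α) / Real.Gamma (2 - α)) (𝓝[<] 1) (𝓝 1) := by
      have hnum : Tendsto (fun α : ℝ => l ^ (1 - α)) (𝓝[<] (1:ℝ)) (𝓝 1) := by
        have hc : ContinuousAt (fun α : ℝ => l ^ (1 - α)) 1 := by
          apply ContinuousAt.rpow continuousAt_const (continuousAt_const.sub continuousAt_id)
          exact Or.inl hl.ne'
        have := hc.tendsto.mono_left (nhdsWithin_le_nhds (s := Set.Iio (1:ℝ)))
        simpa using this
      simpa [Pi.div_def] using hnum.div aux_tendsto_two_sub one_ne_zero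
    refine h2.congr' ?_
    filter_upwards [hev] with α ⟨h0, h1⟩
    exact (hint α h0 h1).symm
  -- nonnegativity
  have hnφ : ∀ᶠ α : ℝ in 𝓝[<] 1, ∀ s ∈ S, 0 ≤ φ α s := by
    filter_upwards [hev] with α ⟨h0, h1⟩ s hs
    have hΓ : 0 < Real.Gamma (1 - α) := Real.Gamma_pos_of_pos (by linarith)
    have : (0:ℝ) ≤ x - s := by simp [hS] at hs; linarith [hs.2]
    positivity
  -- uniform convergence away from x
  have hlφ : ∀ u : Set ℝ, IsOpen u → x ∈ u → TendstoUniformlyOn φ 0 (𝓝[<] 1) (S \ u) := by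
    intro u hu hxu
    obtain ⟨δ, hδ0, hδ⟩ := Metric.isOpen_iff.1 hu x hxu
    rw [Metric.tendstoUniformlyOn_iff]
    intro ε hε
    set C : ℝ := max δ⁻¹ 1 with hC
    have hC0 : 0 < C := lt_of_lt_of_le one_pos (le_max_right _ _)
    have hsmall : Tendsto (fun α : ℝ => (1 / Real.Gamma (1 - α)) * C) (𝓝[<] 1) (𝓝 0) := by
      simpa using aux_inv_Gamma_tendsto.mul_const C
    filter_upwards [hev, hsmall.eventually (eventually_lt_nhds hε)] with α ⟨h0, h1⟩ hsm s hs
    have hΓ : 0 < Real.Gamma (1 - α) := Real.Gamma_pos_of_pos (by linarith)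
    have hsx : δ ≤ x - s := by
      rcases hs with ⟨hs1, hs2⟩
      by_contra h
      push_neg at h
      apply hs2
      apply hδ
      rw [Metric.mem_ball, Real.dist_eq, abs_sub_comm, abs_of_nonneg]
      · linarith
      · simp [hS] at hs1; linarith [hs1.2]
    have hb : (x - s) ^ (-α) ≤ C := by
      have h1' : (x - s) ^ (-α) ≤ δ ^ (-α) :=
        Real.rpow_le_rpow_of_nonpos hδ0 hsx (by linarith)
      refine h1'.trans ?_
      rcases le_or_gt δ 1 with hδ1 | hδ1
      · refine le_trans ?_ (le_max_left _ _)
        have := Real.rpow_le_rpow_of_exponent_ge hδ0 hδ1 (by linarith : -(1:ℝ) ≤ -α)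
        simpa [Real.rpow_neg_one] using this
      · refine le_trans ?_ (le_max_right _ _)
        have := Real.rpow_le_rpow_of_exponent_le hδ1.le (by linarith : -α ≤ 0)
        simpa using this
    have hnn : 0 ≤ (x - s) ^ (-α) := by
      have : (0:ℝ) ≤ x - s := by linarith
      positivity
    rw [Pi.zero_apply, dist_comm, Real.dist_eq, sub_zero, abs_of_nonneg (by positivity)]
    calc (1 / Real.Gamma (1 - α)) * (x - s) ^ (-α)
        ≤ (1 / Real.Gamma (1 - α)) * C := by
          apply mul_le_mul_of_nonneg_left hb; positivity
      _ < ε := hsm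
  -- measurability
  have h'iφ : ∀ᶠ α : ℝ in 𝓝[<] 1, AEStronglyMeasurable (φ α) (volume.restrict S) := by
    filter_upwards with α
    apply Measurable.aestronglyMeasurable
    fun_prop
  -- integrability of ψ
  have hmg : IntegrableOn ψ S := hψ.integrableOn_Icc
  -- convergence of ψ at x
  have hcg : Tendsto ψ (𝓝[S] x) (𝓝 (ψ x)) := hψ.continuousWithinAt hxS
  have main := tendsto_setIntegral_peak_smul_of_integrableOn_of_tendsto
    (μ := volume) (l := 𝓝[<] (1:ℝ)) hmeasS hmeasS (subset_refl S)
    self_mem_nhdsWithin (by exact measure_Icc_lt_top.ne) hnφ hlφ hiφ h'iφ hmg hcg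
  refine main.congr fun α => ?_
  rw [intervalIntegral.integral_of_le hxl, ← MeasureTheory.integral_Icc_eq_integral_Ioc,
    ← MeasureTheory.integral_const_mul]
  simp only [hφ, smul_eq_mul, mul_assoc]
  rfl
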